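/- Let p : ℝ^d → ℝ be a strictly positive, three times continuously differentiable function and θ > 0 a constant such that f := log p satisfies, for all x: ‖∇³f(x)‖₂ ≤ θ, ‖∇²f(x)‖₂ ≤ θ·(‖x‖₂ + 1), and ‖∇f(x)‖₂ ≤ θ·(‖x‖₂² + 1). Then for every x ∈ ℝ^d: (1) ‖∇p(x)‖₂ ≤ p(x)·θ·(‖x‖₂² + 1); (2) ‖∇²p(x)‖₂ ≤ 2·p(x)·(θ² + θ)·(‖x‖₂⁴ + 1); (3) ‖∇³p(x)‖₂ ≤ 8·p(x)·(θ³ + θ² + θ)·(‖x‖₂⁶ + 1). -/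

import Mathlib

open ContinuousLinearMap

noncomputable instance stmt17_instNACG {E : Type*} [NormedAddCommGroup E] [NormedSpace ℝ E] :
    NormedAddCommGroup (E →L[ℝ] ℝ) := ContinuousLinearMap.toNormedAddCommGroup

noncomputable instance stmt17_instNS {E : Type*} [NormedAddCommGroup E] [NormedSpace ℝ E] :
    NormedSpace ℝ (E →L[ℝ] ℝ) := ContinuousLinearMap.toNormedSpace

lemma stmt17_norm3 {E : Type*} [NormedAddCommGroup E] [NormedSpace ℝ E] (g : E → ℝ) (x : E) :
    ‖fderiv ℝ (fderiv ℝ (fderiv ℝ g)) x‖ = ‖iteratedFDeriv ℝ 3 g x‖ := by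
  calc ‖fderiv ℝ (fderiv ℝ (fderiv ℝ g)) x‖
      = ‖iteratedFDeriv ℝ 0 (fderiv ℝ (fderiv ℝ (fderiv ℝ g))) x‖ :=
        by rw [norm_iteratedFDeriv_zero]
    _ = ‖iteratedFDeriv ℝ 1 (fderiv ℝ (fderiv ℝ g)) x‖ := norm_iteratedFDeriv_fderiv
    _ = ‖iteratedFDeriv ℝ 2 (fderiv ℝ g) x‖ := norm_iteratedFDeriv_fderiv
    _ = ‖iteratedFDeriv ℝ 3 g x‖ := norm_iteratedFDeriv_fderiv

lemma stmt17_norm2 {E : Type*} [NormedAddCommGroup E] [NormedSpace ℝ E] (g : E → ℝ) (x : E) :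
    ‖fderiv ℝ (fderiv ℝ g) x‖ = ‖iteratedFDeriv ℝ 2 g x‖ := by
  calc ‖fderiv ℝ (fderiv ℝ g) x‖
      = ‖iteratedFDeriv ℝ 0 (fderiv ℝ (fderiv ℝ g)) x‖ := by rw [norm_iteratedFDeriv_zero]
    _ = ‖iteratedFDeriv ℝ 1 (fderiv ℝ g) x‖ := norm_iteratedFDeriv_fderiv
    _ = ‖iteratedFDeriv ℝ 2 g x‖ := norm_iteratedFDeriv_fderiv

lemma stmt17_grad {E : Type*} [NormedAddCommGroup E] [InnerProductSpace ℝ E] [CompleteSpace E]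
    (g : E → ℝ) (x : E) : ‖gradient g x‖ = ‖fderiv ℝ g x‖ := by
  rw [gradient, LinearIsometryEquiv.norm_map]

lemma stmt17_poly1 (s : ℝ) (hs : 0 ≤ s) : 3 * ((s ^ 2 + 1) * (s + 1)) ≤ 8 * (s ^ 6 + 1) := by
  nlinarith [sq_nonneg (s ^ 3 - 1), sq_nonneg (s ^ 2 - 1), sq_nonneg (s - 1),
    sq_nonneg (s ^ 3 - s), sq_nonneg (s ^ 3 - s ^ 2), sq_nonneg (s ^ 2 - s),
    pow_nonneg hs 2, pow_nonneg hs 3, pow_nonneg hs 4, pow_nonneg hs 6, sq_nonneg s]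

lemma stmt17_poly2 (s : ℝ) (hs : 0 ≤ s) : (s ^ 2 + 1) ^ 3 ≤ 8 * (s ^ 6 + 1) := by
  nlinarith [sq_nonneg (s ^ 2 - 1), pow_nonneg hs 2, pow_nonneg hs 4, pow_nonneg hs 6,
    mul_nonneg (sq_nonneg (s ^ 2 - 1)) (pow_nonneg hs 2)]


lemma stmt17_key2 (P θ s a1 a2 : ℝ) (hP : 0 < P) (hθ : 0 < θ) (hs : 0 ≤ s)
    (ha1n : 0 ≤ a1) (hb1 : a1 ≤ θ * (s ^ 2 + 1)) (hb2 : a2 ≤ θ * (s + 1)) :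
    P * a2 + P * a1 * a1 ≤ 2 * P * (θ ^ 2 + θ) * (s ^ 4 + 1) := by
  have k1 : a2 ≤ θ * (2 * (s ^ 4 + 1)) := by
    refine hb2.trans (mul_le_mul_of_nonneg_left ?_ hθ.le)
    nlinarith [pow_nonneg hs 4, sq_nonneg (s ^ 2 - 1), sq_nonneg (s - 1),
      mul_nonneg (sq_nonneg (s - 1)) hs, pow_nonneg hs 3]
  have k2 : a1 * a1 ≤ (θ * (s ^ 2 + 1)) * (θ * (s ^ 2 + 1)) :=
    mul_le_mul hb1 hb1 ha1n (by positivity)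
  have k3 : (s ^ 2 + 1) * (s ^ 2 + 1) ≤ 2 * (s ^ 4 + 1) := by
    nlinarith [sq_nonneg (s ^ 2 - 1)]
  nlinarith [mul_le_mul_of_nonneg_left k1 hP.le, mul_le_mul_of_nonneg_left k2 hP.le,
    mul_le_mul_of_nonneg_left k3 (mul_nonneg hP.le (sq_nonneg θ)), sq_nonneg θ,
    mul_pos hP hθ, mul_nonneg (mul_nonneg hP.le hθ.le) (pow_nonneg hs 4)]

lemma stmt17_key3 (P θ s a1 a2 a3 : ℝ) (hP : 0 < P) (hθ : 0 < θ) (hs : 0 ≤ s)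
    (ha1n : 0 ≤ a1) (ha2n : 0 ≤ a2) (ha3n : 0 ≤ a3)
    (hb1 : a1 ≤ θ * (s ^ 2 + 1)) (hb2 : a2 ≤ θ * (s + 1)) (hb3 : a3 ≤ θ) :
    (P * a3 + P * a1 * a2) + (P * a1 * a2 + (P * a2 + P * a1 * a1) * a1)
      ≤ 8 * P * (θ ^ 3 + θ ^ 2 + θ) * (s ^ 6 + 1) := by
  have key : P * a3 + 3 * (P * a1 * a2) + P * a1 * a1 * a1
      ≤ 8 * P * (θ ^ 3 + θ ^ 2 + θ) * (s ^ 6 + 1) := by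
    have m3 : P * a3 ≤ P * θ := mul_le_mul_of_nonneg_left hb3 hP.le
    have m12 : a1 * a2 ≤ (θ * (s ^ 2 + 1)) * (θ * (s + 1)) :=
      mul_le_mul hb1 hb2 ha2n (by positivity)
    have m111 : a1 * a1 * a1 ≤ (θ * (s ^ 2 + 1)) ^ 3 := by
      have h7 := pow_le_pow_left₀ ha1n hb1 3
      calc a1 * a1 * a1 = a1 ^ 3 := by ring
        _ ≤ (θ * (s ^ 2 + 1)) ^ 3 := h7
    have p1 := stmt17_poly1 s hs
    have p2 := stmt17_poly2 s hs
    have e1 : θ ≤ θ * (8 * (s ^ 6 + 1)) := by nlinarith [pow_nonneg hs 6]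
    have e2 : 3 * ((θ * (s ^ 2 + 1)) * (θ * (s + 1)))
        ≤ θ ^ 2 * (8 * (s ^ 6 + 1)) := by nlinarith [sq_nonneg θ]
    have e3 : (θ * (s ^ 2 + 1)) ^ 3 ≤ θ ^ 3 * (8 * (s ^ 6 + 1)) := by
      have h8 : (θ * (s ^ 2 + 1)) ^ 3 = θ ^ 3 * (s ^ 2 + 1) ^ 3 := by ring
      rw [h8]
      exact mul_le_mul_of_nonneg_left p2 (by positivity)
    have m12' : 3 * (P * a1 * a2)
        ≤ P * (3 * ((θ * (s ^ 2 + 1)) * (θ * (s + 1)))) := by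
      have h9 : 3 * (P * a1 * a2) = P * (3 * (a1 * a2)) := by ring
      rw [h9]
      exact mul_le_mul_of_nonneg_left (by linarith) hP.le
    have m111' : P * a1 * a1 * a1 ≤ P * (θ * (s ^ 2 + 1)) ^ 3 := by
      have h10 : P * a1 * a1 * a1 = P * (a1 * a1 * a1) := by ring
      rw [h10]
      exact mul_le_mul_of_nonneg_left m111 hP.le
    nlinarith [mul_le_mul_of_nonneg_left e1 hP.le, mul_le_mul_of_nonneg_left e2 hP.le,
      mul_le_mul_of_nonneg_left e3 hP.le]
  nlinarith [key, mul_nonneg hP.le ha1n]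

lemma stmt17_norm_smul {G : Type*} [SeminormedAddCommGroup G] [NormedSpace ℝ G]
    (a : ℝ) (ha : 0 ≤ a) (T : G) : ‖a • T‖ = a * ‖T‖ := by
  rw [norm_smul, Real.norm_eq_abs, abs_of_nonneg ha]

/-- Derivative (with norm bound) of `y ↦ (c y).smulRight (g y)`. -/
lemma stmt17_smulRight_deriv {E F : Type*} [NormedAddCommGroup E] [NormedSpace ℝ E]
    [NormedAddCommGroup F] [NormedSpace ℝ F]
    {c : E → E →L[ℝ] ℝ} {g : E → F} {c' : E →L[ℝ] E →L[ℝ] ℝ} {g' : E →L[ℝ] F} {x : E}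
    (hc : HasFDerivAt c c' x) (hg : HasFDerivAt g g' x) :
    ∃ D : E →L[ℝ] E →L[ℝ] F,
      HasFDerivAt (fun y => (c y).smulRight (g y)) D x ∧
      ‖D‖ ≤ ‖c x‖ * ‖g'‖ + ‖c'‖ * ‖g x‖ := by
  set B := ContinuousLinearMap.smulRightL ℝ E F with hB
  have hD : HasFDerivAt (fun y => (c y).smulRight (g y))
      (B.precompR E (c x) g' + B.precompL E c' (g x)) x :=
    B.hasFDerivAt_of_bilinear hc hg
  refine ⟨_, hD, ?_⟩
  refine (ContinuousLinearMap.opNorm_add_le _ _).trans (add_le_add ?_ ?_)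
  · refine ContinuousLinearMap.opNorm_le_bound _ (by positivity) fun v => ?_
    rw [show (B.precompR E (c x) g') v = (c x).smulRight (g' v) from rfl,
      ContinuousLinearMap.norm_smulRight_apply]
    have h1 : ‖g' v‖ ≤ ‖g'‖ * ‖v‖ := ContinuousLinearMap.le_opNorm _ _
    calc ‖c x‖ * ‖g' v‖ ≤ ‖c x‖ * (‖g'‖ * ‖v‖) :=
          mul_le_mul_of_nonneg_left h1 (norm_nonneg _)
      _ = ‖c x‖ * ‖g'‖ * ‖v‖ := by ring
  · refine ContinuousLinearMap.opNorm_le_bound _ (by positivity) fun v => ?_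
    rw [show (B.precompL E c' (g x)) v = (c' v).smulRight (g x) from rfl,
      ContinuousLinearMap.norm_smulRight_apply]
    have h1 : ‖c' v‖ ≤ ‖c'‖ * ‖v‖ := ContinuousLinearMap.le_opNorm _ _
    calc ‖c' v‖ * ‖g x‖ ≤ (‖c'‖ * ‖v‖) * ‖g x‖ :=
          mul_le_mul_of_nonneg_right h1 (norm_nonneg _)
      _ = ‖c'‖ * ‖g x‖ * ‖v‖ := by ring

set_option maxHeartbeats 1000000 in
set_option synthInstance.maxHeartbeats 400000 in
lemma stmt17_main {E : Type*} [NormedAddCommGroup E] [InnerProductSpace ℝ E] [CompleteSpace E]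
    (p : E → ℝ)
    (hppos : ∀ x, 0 < p x) (hp : ContDiff ℝ 3 p)
    (θ : ℝ) (hθ : 0 < θ)
    (f : E → ℝ) (hf : f = fun x => Real.log (p x))
    (h3 : ∀ x, ‖iteratedFDeriv ℝ 3 f x‖ ≤ θ)
    (h2 : ∀ x, ‖iteratedFDeriv ℝ 2 f x‖ ≤ θ * (‖x‖ + 1))
    (h1 : ∀ x, ‖gradient f x‖ ≤ θ * (‖x‖ ^ 2 + 1))
    (x : E) :
    ‖gradient p x‖ ≤ p x * θ * (‖x‖ ^ 2 + 1) ∧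
    ‖iteratedFDeriv ℝ 2 p x‖ ≤ 2 * p x * (θ ^ 2 + θ) * (‖x‖ ^ 4 + 1) ∧
    ‖iteratedFDeriv ℝ 3 p x‖ ≤ 8 * p x * (θ ^ 3 + θ ^ 2 + θ) * (‖x‖ ^ 6 + 1) := by
  have hfc : ContDiff ℝ 3 f := by
    rw [hf]; exact hp.log fun y => (hppos y).ne'
  have hfd : Differentiable ℝ f := hfc.differentiable (by norm_num)
  have hDf_cd : ContDiff ℝ 2 (fderiv ℝ f) := hfc.fderiv_right (by norm_num)
  have hDf_d : Differentiable ℝ (fderiv ℝ f) := hDf_cd.differentiable (by norm_num)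
  have hD2f_cd : ContDiff ℝ 1 (fderiv ℝ (fderiv ℝ f)) := hDf_cd.fderiv_right (by norm_num)
  have hD2f_d : Differentiable ℝ (fderiv ℝ (fderiv ℝ f)) := hD2f_cd.differentiable (by norm_num)
  have hpe : (fun z => Real.exp (f z)) = p := by
    funext z; rw [hf]; exact Real.exp_log (hppos z)
  have hP1 : ∀ y, HasFDerivAt p (p y • fderiv ℝ f y) y := by
    intro y
    have h := (hfd y).hasFDerivAt.exp
    have he : Real.exp (f y) = p y := by rw [hf]; exact Real.exp_log (hppos y)
    rw [he, hpe] at h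
    exact h
  have hDp : fderiv ℝ p = fun y => p y • fderiv ℝ f y := funext fun y => (hP1 y).fderiv
  have hP2 : ∀ y, HasFDerivAt (fun z => p z • fderiv ℝ f z)
      (p y • fderiv ℝ (fderiv ℝ f) y +
        (p y • fderiv ℝ f y).smulRight (fderiv ℝ f y)) y :=
    fun y => (hP1 y).smul (hDf_d y).hasFDerivAt
  have hD2p : fderiv ℝ (fderiv ℝ p) = fun y =>
      p y • fderiv ℝ (fderiv ℝ f) y +
        (p y • fderiv ℝ f y).smulRight (fderiv ℝ f y) := by
    rw [hDp]; exact funext fun y => (hP2 y).fderiv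
  -- abbreviations
  set a1 := ‖fderiv ℝ f x‖ with ha1def
  set a2 := ‖fderiv ℝ (fderiv ℝ f) x‖ with ha2def
  set a3 := ‖fderiv ℝ (fderiv ℝ (fderiv ℝ f)) x‖ with ha3def
  have hb1 : a1 ≤ θ * (‖x‖ ^ 2 + 1) := by
    rw [ha1def, ← stmt17_grad f x]; exact h1 x
  have hb2 : a2 ≤ θ * (‖x‖ + 1) := by
    rw [ha2def, stmt17_norm2 f x]; exact h2 x
  have hb3 : a3 ≤ θ := by
    rw [ha3def, stmt17_norm3 f x]; exact h3 x
  have hPx : 0 < p x := hppos x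
  have hs : (0:ℝ) ≤ ‖x‖ := norm_nonneg x
  have ha1n : 0 ≤ a1 := norm_nonneg _
  have ha2n : 0 ≤ a2 := norm_nonneg _
  have ha3n : 0 ≤ a3 := ContinuousLinearMap.opNorm_nonneg _
  -- norms of building blocks
  have eDp : ‖p x • fderiv ℝ f x‖ = p x * a1 := stmt17_norm_smul (p x) hPx.le _
  have eD2 : ‖p x • fderiv ℝ (fderiv ℝ f) x‖ ≤ p x * a2 := by
    have h := ContinuousLinearMap.opNorm_smul_le (p x) (fderiv ℝ (fderiv ℝ f) x)
    rwa [Real.norm_eq_abs, abs_of_pos hPx] at h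
  have eD3 : ‖p x • fderiv ℝ (fderiv ℝ (fderiv ℝ f)) x‖ ≤ p x * a3 := by
    have h := ContinuousLinearMap.opNorm_smul_le (p x) (fderiv ℝ (fderiv ℝ (fderiv ℝ f)) x)
    rwa [Real.norm_eq_abs, abs_of_pos hPx] at h
  have eS1 : ‖(p x • fderiv ℝ f x).smulRight (fderiv ℝ f x)‖ = p x * a1 * a1 := by
    rw [ContinuousLinearMap.norm_smulRight_apply, eDp]
  have eS2 : ‖(p x • fderiv ℝ f x).smulRight (fderiv ℝ (fderiv ℝ f) x)‖
      = p x * a1 * a2 := by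
    rw [ContinuousLinearMap.norm_smulRight_apply, eDp]
  -- first claim
  have c1 : ‖gradient p x‖ ≤ p x * θ * (‖x‖ ^ 2 + 1) := by
    rw [stmt17_grad p x, (hP1 x).fderiv, eDp]
    calc p x * a1 ≤ p x * (θ * (‖x‖ ^ 2 + 1)) :=
          mul_le_mul_of_nonneg_left hb1 hPx.le
      _ = p x * θ * (‖x‖ ^ 2 + 1) := by ring
  -- bound on second derivative
  have hB2 : ‖fderiv ℝ (fderiv ℝ p) x‖ ≤ p x * a2 + p x * a1 * a1 := by
    rw [hD2p]
    refine (norm_add_le _ _).trans ?_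
    rw [eS1]
    exact add_le_add eD2 le_rfl
  have c2 : ‖iteratedFDeriv ℝ 2 p x‖ ≤ 2 * p x * (θ ^ 2 + θ) * (‖x‖ ^ 4 + 1) := by
    rw [← stmt17_norm2 p x]
    exact hB2.trans (stmt17_key2 (p x) θ ‖x‖ a1 a2 hPx hθ hs ha1n hb1 hb2)
  -- third derivative
  have hterm1 : HasFDerivAt (fun z => p z • fderiv ℝ (fderiv ℝ f) z)
      (p x • fderiv ℝ (fderiv ℝ (fderiv ℝ f)) x +
        (p x • fderiv ℝ f x).smulRight (fderiv ℝ (fderiv ℝ f) x)) x :=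
    (hP1 x).smul (hD2f_d x).hasFDerivAt
  obtain ⟨D, hD, hDnorm⟩ := stmt17_smulRight_deriv (hP2 x) (hDf_d x).hasFDerivAt
  have hP3 : HasFDerivAt (fderiv ℝ (fderiv ℝ p))
      ((p x • fderiv ℝ (fderiv ℝ (fderiv ℝ f)) x +
        (p x • fderiv ℝ f x).smulRight (fderiv ℝ (fderiv ℝ f) x)) + D) x := by
    rw [hD2p]; exact hterm1.add hD
  have hnT1 : ‖p x • fderiv ℝ (fderiv ℝ (fderiv ℝ f)) x +
        (p x • fderiv ℝ f x).smulRight (fderiv ℝ (fderiv ℝ f) x)‖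
      ≤ p x * a3 + p x * a1 * a2 := by
    refine (ContinuousLinearMap.opNorm_add_le _ _).trans ?_
    rw [eS2]
    exact add_le_add eD3 le_rfl
  have hnD : ‖D‖ ≤ p x * a1 * a2 + (p x * a2 + p x * a1 * a1) * a1 := by
    have h := hDnorm
    rw [eDp, ← ha1def, ← ha2def] at h
    refine h.trans ?_
    have e2 : ‖p x • fderiv ℝ (fderiv ℝ f) x +
        (p x • fderiv ℝ f x).smulRight (fderiv ℝ f x)‖ ≤ p x * a2 + p x * a1 * a1 := by
      refine (norm_add_le _ _).trans ?_
      rw [eS1]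
      exact add_le_add eD2 le_rfl
    exact add_le_add le_rfl (mul_le_mul_of_nonneg_right e2 ha1n)
  have c3 : ‖iteratedFDeriv ℝ 3 p x‖ ≤ 8 * p x * (θ ^ 3 + θ ^ 2 + θ) * (‖x‖ ^ 6 + 1) := by
    rw [← stmt17_norm3 p x, hP3.fderiv]
    have htot : ‖(p x • fderiv ℝ (fderiv ℝ (fderiv ℝ f)) x +
        (p x • fderiv ℝ f x).smulRight (fderiv ℝ (fderiv ℝ f) x)) + D‖
        ≤ (p x * a3 + p x * a1 * a2) +
          (p x * a1 * a2 + (p x * a2 + p x * a1 * a1) * a1) :=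
      (ContinuousLinearMap.opNorm_add_le _ _).trans (add_le_add hnT1 hnD)
    refine htot.trans ?_
    exact stmt17_key3 (p x) θ ‖x‖ a1 a2 a3 hPx hθ hs ha1n ha2n ha3n hb1 hb2 hb3
  exact ⟨c1, c2, c3⟩

theorem stmt17 {d : ℕ} (hd : 0 < d) (p : EuclideanSpace ℝ (Fin d) → ℝ)
    (hppos : ∀ x, 0 < p x) (hp : ContDiff ℝ 3 p)
    (θ : ℝ) (hθ : 0 < θ)
    (f : EuclideanSpace ℝ (Fin d) → ℝ) (hf : f = fun x => Real.log (p x))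
    (h3 : ∀ x, ‖iteratedFDeriv ℝ 3 f x‖ ≤ θ)
    (h2 : ∀ x, ‖iteratedFDeriv ℝ 2 f x‖ ≤ θ * (‖x‖ + 1))
    (h1 : ∀ x, ‖gradient f x‖ ≤ θ * (‖x‖ ^ 2 + 1))
    (x : EuclideanSpace ℝ (Fin d)) :
    ‖gradient p x‖ ≤ p x * θ * (‖x‖ ^ 2 + 1) ∧
    ‖iteratedFDeriv ℝ 2 p x‖ ≤ 2 * p x * (θ ^ 2 + θ) * (‖x‖ ^ 4 + 1) ∧
    ‖iteratedFDeriv ℝ 3 p x‖ ≤ 8 * p x * (θ ^ 3 + θ ^ 2 + θ) * (‖x‖ ^ 6 + 1) :=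
  stmt17_main p hppos hp θ hθ f hf h3 h2 h1 x
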